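/- Let ℓ ≥ 2 be an integer, τ ≥ 0 a real, and q, q̂ : ZMod ℓ → ℝ with |q(k) − q̂(k)| ≤ τ for every k ∈ ZMod ℓ. Then for every i ∈ ZMod ℓ: |(Φ_ℓ(q̂ + e_i) − Φ_ℓ(q̂)) − (Φ_ℓ(q + e_i) − Φ_ℓ(q))| ≤ 8τ. -/
import Mathlib


/-- The cyclic sum-of-squares potential `Φ_ℓ(q) = Σ_{k ∈ ZMod ℓ} (q k − q (k−1))²`
(summed via the enumeration `k ∈ {0,…,ℓ−1}` of `ZMod ℓ`). -/
noncomputable def cycPhi (ℓ : ℕ) (q : ZMod ℓ → ℝ) : ℝ :=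
  ∑ k ∈ Finset.range ℓ, (q (k : ZMod ℓ) - q ((k : ZMod ℓ) - 1)) ^ 2

/-- The indicator vector `e_i : ZMod ℓ → ℝ`. -/
def eVec (ℓ : ℕ) (i : ZMod ℓ) : ZMod ℓ → ℝ := fun k => if k = i then 1 else 0

lemma cycPhi_eq_sum_univ (ℓ : ℕ) [NeZero ℓ] (q : ZMod ℓ → ℝ) :
    cycPhi ℓ q = ∑ k : ZMod ℓ, (q k - q (k - 1)) ^ 2 := by
  unfold cycPhi
  refine Finset.sum_nbij' (fun k => (k : ZMod ℓ)) (fun k => k.val) ?_ ?_ ?_ ?_ ?_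
  · intro a _; exact Finset.mem_univ _
  · intro a _; exact Finset.mem_range.2 (ZMod.val_lt a)
  · intro a ha; exact ZMod.val_cast_of_lt (Finset.mem_range.1 ha)
  · intro a _; simp [ZMod.natCast_val, ZMod.cast_id]
  · intro a _; rfl

lemma cycPhi_cost_diff (ℓ : ℕ) (hℓ : 2 ≤ ℓ) [NeZero ℓ] (q : ZMod ℓ → ℝ) (i : ZMod ℓ) :
    cycPhi ℓ (q + eVec ℓ i) - cycPhi ℓ q
      = 2 * (q i - q (i - 1)) - 2 * (q (i + 1) - q i) + 2 := by
  haveI : Fact (1 < ℓ) := ⟨by omega⟩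
  rw [cycPhi_eq_sum_univ, cycPhi_eq_sum_univ, ← Finset.sum_sub_distrib]
  have hone : (1 : ZMod ℓ) ≠ 0 := one_ne_zero
  have hne : i ≠ i + 1 := fun h => hone (by linear_combination -h)
  have h1 : i - 1 ≠ i := fun h => hone (by linear_combination -h)
  have h2 : (i + 1) - 1 = i := by ring
  rw [Finset.sum_eq_add_of_mem i (i + 1) (Finset.mem_univ _) (Finset.mem_univ _) hne ?_]
  · simp only [Pi.add_apply, eVec, h2, if_pos rfl, if_neg h1, if_neg hne.symm, if_true]
    ring
  · intro c _ hc
    have hc1 : c - 1 ≠ i := fun h => hc.2 (by linear_combination h)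
    simp only [Pi.add_apply, eVec, if_neg hc.1, if_neg hc1]
    ring

/-- Lipschitz cost lemma: if two queue states differ by at most `τ` in every
coordinate, the elementary costs of committing a type-`i` item differ by at
most `8τ`. -/
theorem cycPhi_cost_lipschitz
    (ℓ : ℕ) (hℓ : 2 ≤ ℓ) (τ : ℝ) (hτ : 0 ≤ τ)
    (q qhat : ZMod ℓ → ℝ) (hclose : ∀ k, |q k - qhat k| ≤ τ) (i : ZMod ℓ) :
    |(cycPhi ℓ (qhat + eVec ℓ i) - cycPhi ℓ qhat)
      - (cycPhi ℓ (q + eVec ℓ i) - cycPhi ℓ q)| ≤ 8 * τ := by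
  haveI : NeZero ℓ := ⟨by omega⟩
  rw [cycPhi_cost_diff ℓ hℓ qhat i, cycPhi_cost_diff ℓ hℓ q i]
  have hi := abs_le.1 (hclose i)
  have him := abs_le.1 (hclose (i - 1))
  have hip := abs_le.1 (hclose (i + 1))
  rw [abs_le]
  constructor <;> [nlinarith; nlinarith]
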